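/- For all natural numbers n and k with k ≤ n, the following identity of Andrews holds: ∑_{a=0}^{min(k, n−k)} C(k,a) · C(n−k,a) · C(n+k+a,n) = C(n+k,k) · C(n+k,n−k). (Equivalently, the sum may be taken over all a ≥ 0 since terms with a > min(k, n−k) vanish.) -/

import Mathlib

open Finset

/-- subset-of-subset identity without the `k ≤ n` hypothesis -/
lemma choose_mul' (n k s : ℕ) (hsk : s ≤ k) :
    n.choose k * k.choose s = n.choose s * (n - s).choose (k - s) := by
  by_cases hkn : k ≤ n
  · exact Nat.choose_mul hsk
  · push_neg at hkn
    rw [Nat.choose_eq_zero_of_lt hkn, Nat.zero_mul]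
    by_cases hsn : s ≤ n
    · rw [Nat.choose_eq_zero_of_lt (by omega : n - s < k - s), Nat.mul_zero]
    · rw [Nat.choose_eq_zero_of_lt (by omega), Nat.zero_mul]

/-- Vandermonde, range form -/
lemma vand (p q m : ℕ) :
    (p + q).choose m = ∑ j ∈ range (m + 1), p.choose j * q.choose (m - j) := by
  rw [Nat.add_choose_eq]
  exact Finset.Nat.sum_antidiagonal_eq_sum_range_succ_mk _ m

lemma inner_eval (x y j : ℕ) (hj : j ≤ x) :
    ∑ a ∈ range (x + 1), x.choose a * y.choose a * a.choose j
      = y.choose j * ((y - j) + x).choose (x - j) := by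
  have h1 : ∑ a ∈ range (x + 1), x.choose a * y.choose a * a.choose j
      = ∑ a ∈ Ico j (x + 1), x.choose a * y.choose a * a.choose j := by
    refine (Finset.sum_subset ?_ ?_).symm
    · intro a ha; simp only [mem_Ico, mem_range] at *; omega
    · intro a ha ha'
      simp only [mem_Ico, mem_range] at *
      rw [Nat.choose_eq_zero_of_lt (show a < j by omega), Nat.mul_zero]
  rw [h1, Finset.sum_Ico_eq_sum_range]
  have h2 : ∀ c, x.choose (j + c) * y.choose (j + c) * (j + c).choose j
      = y.choose j * (x.choose (j + c) * (y - j).choose c) := by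
    intro c
    have := choose_mul' y (j + c) j (Nat.le_add_right _ _)
    rw [Nat.add_sub_cancel_left] at this
    rw [Nat.mul_assoc, this]; ring
  simp only [h2, ← Finset.mul_sum]
  congr 1
  rw [vand (y - j) x (x - j)]
  have hxj : x + 1 - j = x - j + 1 := by omega
  rw [hxj]
  refine Finset.sum_congr rfl ?_
  intro c hc
  simp only [mem_range] at hc
  rw [Nat.mul_comm]
  congr 1
  rw [show x - j - c = x - (j + c) by omega, Nat.choose_symm (show j + c ≤ x by omega)]

lemma key (x y s : ℕ) (hs : y ≤ s) :
    ∑ a ∈ range (x + 1), x.choose a * y.choose a * (s + a).choose (x + y)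
      = s.choose x * s.choose y := by
  have step1 : ∀ a, (s + a).choose (x + y)
      = ∑ j ∈ range (x + y + 1), a.choose j * s.choose (x + y - j) := by
    intro a
    rw [Nat.add_comm s a]
    exact vand a s (x + y)
  calc ∑ a ∈ range (x + 1), x.choose a * y.choose a * (s + a).choose (x + y)
      = ∑ a ∈ range (x + 1), ∑ j ∈ range (x + y + 1),
          s.choose (x + y - j) * (x.choose a * y.choose a * a.choose j) := by
        refine Finset.sum_congr rfl fun a _ => ?_
        rw [step1, Finset.mul_sum]
        exact Finset.sum_congr rfl fun j _ => by ring
    _ = ∑ j ∈ range (x + y + 1), s.choose (x + y - j) *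
          ∑ a ∈ range (x + 1), x.choose a * y.choose a * a.choose j := by
        rw [Finset.sum_comm]
        exact Finset.sum_congr rfl fun j _ => by rw [Finset.mul_sum]
    _ = ∑ j ∈ range (x + 1), s.choose (x + y - j) *
          ∑ a ∈ range (x + 1), x.choose a * y.choose a * a.choose j := by
        refine (Finset.sum_subset ?_ ?_).symm
        · intro j hj; simp only [mem_range] at *; omega
        · intro j hj hj'
          simp only [mem_range] at hj hj'
          have : ∑ a ∈ range (x + 1), x.choose a * y.choose a * a.choose j = 0 := by
            refine Finset.sum_eq_zero fun a ha => ?_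
            simp only [mem_range] at ha
            rw [Nat.choose_eq_zero_of_lt (show a < j by omega), Nat.mul_zero]
          rw [this, Nat.mul_zero]
    _ = ∑ j ∈ range (x + 1), s.choose y * (y.choose j * (s - y).choose (x - j)) := by
        refine Finset.sum_congr rfl fun j hj => ?_
        simp only [mem_range] at hj
        rw [inner_eval x y j (by omega)]
        by_cases hjy : j ≤ y
        · have hyx : (y - j) + x = x + y - j := by omega
          rw [hyx]
          have hsymm : (x + y - j).choose (x - j) = (x + y - j).choose y := by
            calc (x + y - j).choose (x - j)
                = (x + y - j).choose (x + y - j - (x - j)) :=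
                  (Nat.choose_symm (show x - j ≤ x + y - j by omega)).symm
              _ = (x + y - j).choose y := by rw [show x + y - j - (x - j) = y by omega]
          have hm := choose_mul' s (x + y - j) y (by omega)
          rw [show x + y - j - y = x - j by omega] at hm
          rw [hsymm, mul_left_comm, hm, mul_left_comm]
        · rw [Nat.choose_eq_zero_of_lt (by omega : y < j), Nat.zero_mul, Nat.mul_zero,
            Nat.zero_mul, Nat.mul_zero]
    _ = s.choose x * s.choose y := by
        rw [← Finset.mul_sum, ← vand y (s - y) x]
        have : y + (s - y) = s := by omega
        rw [this, Nat.mul_comm]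

theorem andrews_identity (n k : ℕ) (hk : k ≤ n) :
    ∑ a ∈ range (min k (n - k) + 1), k.choose a * (n - k).choose a * (n + k + a).choose n
      = (n + k).choose k * (n + k).choose (n - k) := by
  obtain ⟨y, rfl⟩ : ∃ y, n = k + y := ⟨n - k, by omega⟩
  have hy : k + y - k = y := by omega
  rw [hy]
  have hrange : ∑ a ∈ range (min k y + 1), k.choose a * y.choose a * (k + y + k + a).choose (k + y)
      = ∑ a ∈ range (k + 1), k.choose a * y.choose a * (k + y + k + a).choose (k + y) := by
    refine Finset.sum_subset ?_ ?_
    · intro a ha; simp only [mem_range] at *; omega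
    · intro a ha ha'
      simp only [mem_range] at ha ha'
      rw [Nat.choose_eq_zero_of_lt (by omega : y < a), Nat.mul_zero, Nat.zero_mul]
  rw [hrange, key k y (k + y + k) (by omega)]
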